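/- Let k ≥ 1, let γ_1 < γ_2 < … < γ_{k+1} be real labels, and let ρ : ℝ → ℝ be affine on each interval [γ_i, γ_{i+1}], i.e. ρ(γ_i^α) = (1−α)·ρ(γ_i) + α·ρ(γ_{i+1}) for all 1 ≤ i ≤ k and all α ∈ [0,1]. Then the convex biconjugates of the lifted dataterm ρ_lift := min_{1≤i≤k} ρ_i and of the label-restricted function σ coincide: ρ_lift^{**}(u) = σ^{**}(u) for every u ∈ ℝ^k. -/

import Mathlib

/-- Dot product (inner product) on ℝ^k. -/
noncomputable def dotk {k : ℕ} (v u : Fin k → ℝ) : ℝ := ∑ j, v j * u j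

/-- Convex conjugate of an extended-real-valued function on ℝ^k:
`f^*(v) = sup_u ⟨v,u⟩ - f(u)`. -/
noncomputable def conjV {k : ℕ} (f : (Fin k → ℝ) → EReal) (v : Fin k → ℝ) : EReal :=
  ⨆ u : Fin k → ℝ, (dotk v u : EReal) - f u

/-- The vector `1_i` : first `i` entries 1, remaining entries 0 (so `onevec k 0 = 0`). -/
noncomputable def onevec (k : ℕ) (i : ℕ) : Fin k → ℝ := fun j => if (j : ℕ) < i then 1 else 0

/-- `1_i^α` (with 0-based interval index `i`): first `i` entries 1, entry `i` equals `α`,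
remaining entries 0.  This is `α • 1_{i+1} + (1-α) • 1_i` in the 0-based numbering of `onevec`. -/
noncomputable def liftvec {k : ℕ} (i : Fin k) (α : ℝ) : Fin k → ℝ :=
  fun j => if (j : ℕ) < (i : ℕ) then 1 else if j = i then α else 0

/-- `γ_i^α = γ_i + α (γ_{i+1} - γ_i)`, with 0-based interval index `i`. -/
noncomputable def gammaAff {k : ℕ} (γ : Fin (k+1) → ℝ) (i : Fin k) (α : ℝ) : ℝ :=
  γ i.castSucc + α * (γ i.succ - γ i.castSucc)

/-- The lifted piece `ρ_i` : equals `ρ(γ_i^α)` if `u = 1_i^α` for some `α ∈ [0,1]`,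
and `+∞` otherwise (the set below is a singleton or empty, and `sInf ∅ = ⊤` in `EReal`). -/
noncomputable def rhoPiece {k : ℕ} (γ : Fin (k+1) → ℝ) (ρ : ℝ → ℝ) (i : Fin k)
    (u : Fin k → ℝ) : EReal :=
  sInf {c : EReal | ∃ α ∈ Set.Icc (0:ℝ) 1, u = liftvec i α ∧ c = (ρ (gammaAff γ i α) : EReal)}

/-- The label-restricted function `σ` : equals `ρ(γ_{i+1})` at `1_i` for `0 ≤ i ≤ k`
(here `γ` is 0-indexed, so `σ(onevec k i) = ρ(γ i)` for `i : Fin (k+1)`),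
and `+∞` at every other point. -/
noncomputable def sigmaF {k : ℕ} (γ : Fin (k+1) → ℝ) (ρ : ℝ → ℝ) (u : Fin k → ℝ) : EReal :=
  sInf {c : EReal | ∃ i : Fin (k+1), u = onevec k (i : ℕ) ∧ c = (ρ (γ i) : EReal)}

/- ------------------- auxiliary lemmas ------------------- -/

lemma onevec_inj {k : ℕ} {i j : Fin (k+1)} (h : onevec k i = onevec k j) : i = j := by
  by_contra hne
  rcases lt_or_gt_of_ne (fun hv => hne (Fin.ext hv) : (i:ℕ) ≠ (j:ℕ)) with hlt | hlt
  · have hik : (i:ℕ) < k := lt_of_lt_of_le hlt (Nat.lt_succ_iff.mp j.isLt)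
    have := congrFun h ⟨i, hik⟩
    simp [onevec, hlt] at this
  · have hjk : (j:ℕ) < k := lt_of_lt_of_le hlt (Nat.lt_succ_iff.mp i.isLt)
    have := congrFun h ⟨j, hjk⟩
    simp [onevec, hlt] at this

lemma sigmaF_onevec {k : ℕ} (γ : Fin (k+1) → ℝ) (ρ : ℝ → ℝ) (i : Fin (k+1)) :
    sigmaF γ ρ (onevec k i) = (ρ (γ i) : EReal) := by
  have : {c : EReal | ∃ j : Fin (k+1), onevec k (i:ℕ) = onevec k (j:ℕ) ∧ c = (ρ (γ j) : EReal)}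
      = {(ρ (γ i) : EReal)} := by
    ext c
    constructor
    · rintro ⟨j, hu, rfl⟩
      have : i = j := onevec_inj hu
      simp [this]
    · rintro rfl; exact ⟨i, rfl, rfl⟩
  rw [sigmaF, this, sInf_singleton]

lemma liftvec_inj_alpha {k : ℕ} {i : Fin k} {α β : ℝ} (h : liftvec i α = liftvec i β) :
    α = β := by
  have := congrFun h i
  simpa [liftvec] using this

lemma rhoPiece_liftvec {k : ℕ} (γ : Fin (k+1) → ℝ) (ρ : ℝ → ℝ) (i : Fin k) {α : ℝ}
    (hα : α ∈ Set.Icc (0:ℝ) 1) :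
    rhoPiece γ ρ i (liftvec i α) = (ρ (gammaAff γ i α) : EReal) := by
  have : {c : EReal | ∃ β ∈ Set.Icc (0:ℝ) 1,
      liftvec i α = liftvec i β ∧ c = (ρ (gammaAff γ i β) : EReal)}
      = {(ρ (gammaAff γ i α) : EReal)} := by
    ext c
    constructor
    · rintro ⟨β, hβ, hu, rfl⟩
      have : α = β := liftvec_inj_alpha hu
      simp [this]
    · rintro rfl; exact ⟨α, hα, rfl, rfl⟩
  rw [rhoPiece, this, sInf_singleton]

lemma liftvec_zero {k : ℕ} (i : Fin k) : liftvec i 0 = onevec k i := by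
  funext j
  by_cases h : (j:ℕ) < (i:ℕ)
  · simp [liftvec, onevec, h]
  · by_cases h2 : j = i
    · subst h2; simp [liftvec, onevec]
    · simp [liftvec, onevec, h, h2]

lemma liftvec_one {k : ℕ} (i : Fin k) : liftvec i 1 = onevec k ((i:ℕ)+1) := by
  funext j
  by_cases h : (j:ℕ) < (i:ℕ)
  · simp [liftvec, onevec, h, Nat.lt_succ_of_lt h]
  · by_cases h2 : j = i
    · subst h2; simp [liftvec, onevec]
    · have : ¬ ((j:ℕ) < (i:ℕ)+1) := by
        intro hc
        rcases Nat.lt_succ_iff_lt_or_eq.mp hc with hc | hc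
        · exact h hc
        · exact h2 (Fin.ext hc)
      simp [liftvec, onevec, h, h2, this]

lemma liftvec_comb {k : ℕ} (i : Fin k) (α : ℝ) :
    liftvec i α = fun j => (1-α) * onevec k (i:ℕ) j + α * onevec k ((i:ℕ)+1) j := by
  funext j
  by_cases h : (j:ℕ) < (i:ℕ)
  · simp [liftvec, onevec, h, Nat.lt_succ_of_lt h]
    try ring
  · by_cases h2 : j = i
    · subst h2; simp [liftvec, onevec]
    · have : ¬ ((j:ℕ) < (i:ℕ)+1) := by
        intro hc
        rcases Nat.lt_succ_iff_lt_or_eq.mp hc with hc | hc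
        · exact h hc
        · exact h2 (Fin.ext hc)
      simp [liftvec, onevec, h, h2, this]

lemma dotk_liftvec {k : ℕ} (v : Fin k → ℝ) (i : Fin k) (α : ℝ) :
    dotk v (liftvec i α)
      = (1-α) * dotk v (onevec k (i:ℕ)) + α * dotk v (onevec k ((i:ℕ)+1)) := by
  rw [liftvec_comb]
  simp only [dotk, Finset.mul_sum, ← Finset.sum_add_distrib]
  exact Finset.sum_congr rfl fun j _ => by ring

/-- Both first conjugates equal the sup over the label points. -/
lemma conj_eq_aux {k : ℕ} (hk : 1 ≤ k) (γ : Fin (k+1) → ℝ) (ρ : ℝ → ℝ)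
    (haff : ∀ i : Fin k, ∀ α ∈ Set.Icc (0:ℝ) 1,
      ρ (gammaAff γ i α) = (1 - α) * ρ (γ i.castSucc) + α * ρ (γ i.succ)) :
    conjV (fun w => ⨅ i : Fin k, rhoPiece γ ρ i w) = conjV (sigmaF γ ρ) := by
  funext v
  set S : EReal := ⨆ i : Fin (k+1), ((dotk v (onevec k (i:ℕ)) - ρ (γ i) : ℝ) : EReal) with hS
  have hne : Nonempty (Fin k) := ⟨⟨0, hk⟩⟩
  have hlift : conjV (fun w => ⨅ i : Fin k, rhoPiece γ ρ i w) v = S := by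
    apply le_antisymm
    · apply iSup_le
      intro u
      show (dotk v u : EReal) - (⨅ j, rhoPiece γ ρ j u) ≤ S
      obtain ⟨i, hi⟩ : ∃ i, (⨅ j, rhoPiece γ ρ j u) = rhoPiece γ ρ i u := by
        obtain ⟨i, hmin⟩ := Finite.exists_min (fun j => rhoPiece γ ρ j u)
        exact ⟨i, le_antisymm (iInf_le _ _) (le_iInf hmin)⟩
      rw [hi]
      by_cases hrep : ∃ α ∈ Set.Icc (0:ℝ) 1, u = liftvec i α
      · obtain ⟨α, hα, rfl⟩ := hrep
        rw [rhoPiece_liftvec γ ρ i hα]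
        have hcoe : (dotk v (liftvec i α) : EReal) - (ρ (gammaAff γ i α) : EReal)
            = ((dotk v (liftvec i α) - ρ (gammaAff γ i α) : ℝ) : EReal) := by
          exact_mod_cast rfl
        rw [hcoe]
        set T0 : ℝ := dotk v (onevec k ((i.castSucc : Fin (k+1)) : ℕ)) - ρ (γ i.castSucc)
        set T1 : ℝ := dotk v (onevec k ((i.succ : Fin (k+1)) : ℕ)) - ρ (γ i.succ)
        have hval : dotk v (liftvec i α) - ρ (gammaAff γ i α) = (1-α) * T0 + α * T1 := by
          rw [dotk_liftvec, haff i α hα]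
          simp only [T0, T1, Fin.coe_castSucc, Fin.val_succ]
          ring
        have hle : dotk v (liftvec i α) - ρ (gammaAff γ i α) ≤ max T0 T1 := by
          rw [hval]
          obtain ⟨h0, h1⟩ := hα
          calc (1-α) * T0 + α * T1 ≤ (1-α) * max T0 T1 + α * max T0 T1 := by
                gcongr
                · exact le_max_left _ _
                · exact le_max_right _ _
            _ = max T0 T1 := by ring
        rcases max_cases T0 T1 with ⟨hm, _⟩ | ⟨hm, _⟩
        · rw [hm] at hle
          exact le_trans (EReal.coe_le_coe_iff.mpr hle)
            (le_iSup (fun j : Fin (k+1) => ((dotk v (onevec k (j:ℕ)) - ρ (γ j) : ℝ) : EReal))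
              i.castSucc)
        · rw [hm] at hle
          exact le_trans (EReal.coe_le_coe_iff.mpr hle)
            (le_iSup (fun j : Fin (k+1) => ((dotk v (onevec k (j:ℕ)) - ρ (γ j) : ℝ) : EReal))
              i.succ)
      · have htop : rhoPiece γ ρ i u = ⊤ := by
          rw [rhoPiece]
          rw [sInf_eq_top]
          rintro c ⟨α, hα, hu, _⟩
          exact (hrep ⟨α, hα, hu⟩).elim
        rw [htop]
        show (dotk v u : EReal) - ⊤ ≤ S
        rw [show (dotk v u : EReal) - ⊤ = ⊥ from rfl]
        exact bot_le
    · apply iSup_le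
      intro i
      have key : ∃ w : Fin k → ℝ, w = onevec k (i:ℕ) ∧
          (⨅ j, rhoPiece γ ρ j w) ≤ (ρ (γ i) : EReal) := by
        by_cases h : (i:ℕ) < k
        · refine ⟨onevec k (i:ℕ), rfl, ?_⟩
          set i' : Fin k := ⟨(i:ℕ), h⟩
          have h1 : liftvec i' 0 = onevec k (i:ℕ) := liftvec_zero i'
          have h2 : gammaAff γ i' 0 = γ i := by
            have hcs : (i'.castSucc : Fin (k+1)) = i := Fin.ext rfl
            simp [gammaAff, hcs]
          calc (⨅ j, rhoPiece γ ρ j (onevec k (i:ℕ))) ≤ rhoPiece γ ρ i' (onevec k (i:ℕ)) :=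
                iInf_le _ _
            _ = (ρ (γ i) : EReal) := by
                rw [← h1, rhoPiece_liftvec γ ρ i' ⟨le_refl 0, zero_le_one⟩, h2]
        · have hik : (i:ℕ) = k := le_antisymm (Nat.lt_succ_iff.mp i.isLt) (not_lt.mp h)
          refine ⟨onevec k (i:ℕ), rfl, ?_⟩
          set i' : Fin k := ⟨k-1, Nat.sub_lt hk one_pos⟩
          have hk1 : (i':ℕ) + 1 = k := Nat.succ_pred_eq_of_pos hk
          have h1 : liftvec i' 1 = onevec k (i:ℕ) := by
            rw [liftvec_one, hk1, hik]
          have h2 : gammaAff γ i' 1 = γ i := by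
            simp only [gammaAff, one_mul]
            have : (i'.succ : Fin (k+1)) = i := by
              apply Fin.ext
              simp [Fin.val_succ, hk1, hik]
            rw [this]; ring
          calc (⨅ j, rhoPiece γ ρ j (onevec k (i:ℕ))) ≤ rhoPiece γ ρ i' (onevec k (i:ℕ)) :=
                iInf_le _ _
            _ = (ρ (γ i) : EReal) := by
                rw [← h1, rhoPiece_liftvec γ ρ i' ⟨zero_le_one, le_refl 1⟩, h2]
      obtain ⟨w, rfl, hle⟩ := key
      have : ((dotk v (onevec k (i:ℕ)) - ρ (γ i) : ℝ) : EReal)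
          ≤ (dotk v (onevec k (i:ℕ)) : EReal) - (⨅ j, rhoPiece γ ρ j (onevec k (i:ℕ))) := by
        have hc : ((dotk v (onevec k (i:ℕ)) - ρ (γ i) : ℝ) : EReal)
            = (dotk v (onevec k (i:ℕ)) : EReal) - (ρ (γ i) : EReal) := by exact_mod_cast rfl
        rw [hc]
        exact EReal.sub_le_sub le_rfl hle
      exact le_trans this (le_iSup (fun w => (dotk v w : EReal) - ⨅ j, rhoPiece γ ρ j w)
        (onevec k (i:ℕ)))
  have hsig : conjV (sigmaF γ ρ) v = S := by
    apply le_antisymm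
    · apply iSup_le
      intro u
      by_cases hrep : ∃ i : Fin (k+1), u = onevec k (i:ℕ)
      · obtain ⟨i, rfl⟩ := hrep
        rw [sigmaF_onevec]
        have hc : (dotk v (onevec k (i:ℕ)) : EReal) - (ρ (γ i) : EReal)
            = ((dotk v (onevec k (i:ℕ)) - ρ (γ i) : ℝ) : EReal) := by exact_mod_cast rfl
        rw [hc]
        exact le_iSup (fun j : Fin (k+1) => ((dotk v (onevec k (j:ℕ)) - ρ (γ j) : ℝ) : EReal)) i
      · have htop : sigmaF γ ρ u = ⊤ := by
          rw [sigmaF]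
          rw [sInf_eq_top]
          rintro c ⟨i, hu, _⟩
          exact (hrep ⟨i, hu⟩).elim
        rw [htop]
        show (dotk v u : EReal) - ⊤ ≤ S
        rw [show (dotk v u : EReal) - ⊤ = ⊥ from rfl]
        exact bot_le
    · apply iSup_le
      intro i
      have : ((dotk v (onevec k (i:ℕ)) - ρ (γ i) : ℝ) : EReal)
          = (dotk v (onevec k (i:ℕ)) : EReal) - sigmaF γ ρ (onevec k (i:ℕ)) := by
        rw [sigmaF_onevec]; exact_mod_cast rfl
      rw [this]
      exact le_iSup (fun w => (dotk v w : EReal) - sigmaF γ ρ w) (onevec k (i:ℕ))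
  rw [hlift, hsig]

/-- Corollary 1. If `ρ` is affine on each interval `[γ_i, γ_{i+1}]`,
then the biconjugates of the lifted dataterm `ρ_lift = min_i ρ_i` and of the
label-restricted function `σ` coincide. -/
theorem biconj_rhoLift_eq_biconj_sigma {k : ℕ} (hk : 1 ≤ k) (γ : Fin (k+1) → ℝ)
    (hγ : StrictMono γ) (ρ : ℝ → ℝ)
    (haff : ∀ i : Fin k, ∀ α ∈ Set.Icc (0:ℝ) 1,
      ρ (gammaAff γ i α) = (1 - α) * ρ (γ i.castSucc) + α * ρ (γ i.succ))
    (u : Fin k → ℝ) :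
    conjV (conjV (fun w => ⨅ i : Fin k, rhoPiece γ ρ i w)) u
      = conjV (conjV (sigmaF γ ρ)) u := by
  rw [conj_eq_aux hk γ ρ haff]
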